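/- There is an absolute constant C > 0 such that for all real N ≥ 1 and z ≥ 1 and every integer m with 1 ≤ m ≤ N, the number of quadruples (x₁, x₂, x₃, x₄) of positive integers with x₁² ≤ N, x₂² ≤ N, x₃² ≤ N, x₄² ≤ N, satisfying x₁² + x₄² = x₂² + x₃² + m and such that x₁ < z or x₂ < z, is at most C · N^{2/3} · z. -/

import Mathlib

private lemma pow6_aux (e : ℕ) : (e + 1) ^ 6 ≤ 4096 * 2 ^ e := by
  induction e with
  | zero => norm_num
  | succ e ih =>
    rcases lt_or_ge e 8 with h | h
    · interval_cases e <;> norm_num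
    · have h2 : 9 ^ 6 * (e + 2) ^ 6 ≤ 10 ^ 6 * (e + 1) ^ 6 := by
        calc 9 ^ 6 * (e + 2) ^ 6 = (9 * (e + 2)) ^ 6 := by ring
          _ ≤ (10 * (e + 1)) ^ 6 := Nat.pow_le_pow_left (by omega) 6
          _ = 10 ^ 6 * (e + 1) ^ 6 := by ring
      have h3 : 10 ^ 6 * (e + 1) ^ 6 ≤ 10 ^ 6 * (4096 * 2 ^ e) :=
        Nat.mul_le_mul_left _ ih
      have h4 : 10 ^ 6 * (4096 * 2 ^ e) ≤ 9 ^ 6 * (4096 * 2 ^ (e + 1)) := by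
        have h : (10:ℕ) ^ 6 * 4096 ≤ 9 ^ 6 * (4096 * 2) := by norm_num
        calc 10 ^ 6 * (4096 * 2 ^ e) = 10 ^ 6 * 4096 * 2 ^ e := by ring
          _ ≤ 9 ^ 6 * (4096 * 2) * 2 ^ e := Nat.mul_le_mul_right _ h
          _ = 9 ^ 6 * (4096 * 2 ^ (e + 1)) := by ring
      exact Nat.le_of_mul_le_mul_left (le_trans h2 (le_trans h3 h4)) (by norm_num)

private lemma card_divisors_pow6_le (n : ℕ) : n.divisors.card ^ 6 ≤ 4096 ^ 65 * n := by
  rcases Nat.eq_zero_or_pos n with rfl | hn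
  · simp
  have hn' : n ≠ 0 := hn.ne'
  rw [Nat.card_divisors hn', ← Finset.prod_pow]
  have key : ∀ p ∈ n.primeFactors, (n.factorization p + 1) ^ 6 ≤
      (if p ≤ 64 then 4096 else 1) * p ^ n.factorization p := by
    intro p hp
    have hp' : p.Prime := Nat.prime_of_mem_primeFactors hp
    by_cases h64 : p ≤ 64
    · simp only [if_pos h64]
      calc (n.factorization p + 1) ^ 6 ≤ 4096 * 2 ^ n.factorization p := pow6_aux _
        _ ≤ 4096 * p ^ n.factorization p :=
          Nat.mul_le_mul_left _ (Nat.pow_le_pow_left hp'.two_le _)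
    · simp only [if_neg h64]
      push_neg at h64
      have h1 : n.factorization p + 1 ≤ 2 ^ n.factorization p :=
        Nat.lt_two_pow_self
      have h2 : ((2:ℕ) ^ n.factorization p) ^ 6 = 64 ^ n.factorization p := by
        rw [← pow_mul, mul_comm, pow_mul]
        norm_num
      calc (n.factorization p + 1) ^ 6 ≤ (2 ^ n.factorization p) ^ 6 :=
            Nat.pow_le_pow_left h1 6
        _ = 64 ^ n.factorization p := h2
        _ ≤ p ^ n.factorization p := Nat.pow_le_pow_left (by omega) _
        _ = 1 * p ^ n.factorization p := (one_mul _).symm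
  calc ∏ p ∈ n.primeFactors, (n.factorization p + 1) ^ 6
      ≤ ∏ p ∈ n.primeFactors, (if p ≤ 64 then 4096 else 1) * p ^ n.factorization p :=
        Finset.prod_le_prod (fun i _ => Nat.zero_le _) key
    _ = (∏ p ∈ n.primeFactors, if p ≤ 64 then 4096 else 1) *
        ∏ p ∈ n.primeFactors, p ^ n.factorization p := Finset.prod_mul_distrib
    _ ≤ 4096 ^ 65 * n := by
        have hprod2 : ∏ p ∈ n.primeFactors, p ^ n.factorization p = n := by
          have := Nat.factorization_prod_pow_eq_self hn'
          rw [Finsupp.prod, Nat.support_factorization] at this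
          exact this
        have hprod1 : (∏ p ∈ n.primeFactors, if p ≤ 64 then 4096 else 1) ≤ 4096 ^ 65 := by
          rw [← Finset.prod_filter, Finset.prod_const]
          refine Nat.pow_le_pow_right (by norm_num) ?_
          refine le_trans (Finset.card_le_card (fun x hx => ?_)) (le_of_eq (Finset.card_range 65))
          rw [Finset.mem_range]
          exact Nat.lt_succ_of_le (Finset.mem_filter.mp hx).2
        rw [hprod2]
        exact Nat.mul_le_mul_right _ hprod1

private lemma set_ncard_le {α β : Type*} {s : Set α} {f : α → β} {F : Finset β}
    (hinj : Set.InjOn f s) (hmap : ∀ a ∈ s, f a ∈ F) : s.ncard ≤ F.card := by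
  classical
  have himg : f '' s ⊆ ↑F := by rintro _ ⟨a, ha, rfl⟩; exact hmap a ha
  rw [← Set.ncard_image_of_injOn hinj, ← Set.ncard_coe_finset F]
  exact Set.ncard_le_ncard himg F.finite_toSet

private lemma le_rpow_inv_of_pow_le {x y : ℝ} {n : ℕ} (hn : n ≠ 0) (hx : 0 ≤ x)
    (h : x ^ n ≤ y) : x ≤ y ^ ((n:ℝ)⁻¹) := by
  have hy : 0 ≤ y := le_trans (pow_nonneg hx n) h
  have hx' : x = (x ^ n) ^ ((n:ℝ)⁻¹) := by
    rw [← Real.rpow_natCast x n, ← Real.rpow_mul hx,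
      mul_inv_cancel₀ (by exact_mod_cast hn), Real.rpow_one]
  rw [hx']
  exact Real.rpow_le_rpow (pow_nonneg hx n) h (by positivity)

theorem count_quadruples_small_coordinate :
    ∃ C : ℝ, 0 < C ∧ ∀ N z : ℝ, 1 ≤ N → 1 ≤ z → ∀ m : ℕ, 1 ≤ m → (m : ℝ) ≤ N →
      ({t : ℕ × ℕ × ℕ × ℕ | 1 ≤ t.1 ∧ 1 ≤ t.2.1 ∧ 1 ≤ t.2.2.1 ∧ 1 ≤ t.2.2.2 ∧
          ((t.1 : ℝ)) ^ 2 ≤ N ∧ ((t.2.1 : ℝ)) ^ 2 ≤ N ∧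
          ((t.2.2.1 : ℝ)) ^ 2 ≤ N ∧ ((t.2.2.2 : ℝ)) ^ 2 ≤ N ∧
          t.1 ^ 2 + t.2.2.2 ^ 2 = t.2.1 ^ 2 + t.2.2.1 ^ 2 + m ∧
          ((t.1 : ℝ) < z ∨ (t.2.1 : ℝ) < z)}.ncard : ℝ)
        ≤ C * N ^ ((2 : ℝ) / 3) * z := by
  classical
  refine ⟨7 + 2 * (2 * 4096 ^ 65 : ℝ) ^ ((6:ℝ)⁻¹), by positivity, ?_⟩
  intro N z hN hz m hm hmN
  set S : Set (ℕ × ℕ × ℕ × ℕ) := {t : ℕ × ℕ × ℕ × ℕ | 1 ≤ t.1 ∧ 1 ≤ t.2.1 ∧ 1 ≤ t.2.2.1 ∧ 1 ≤ t.2.2.2 ∧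
          ((t.1 : ℝ)) ^ 2 ≤ N ∧ ((t.2.1 : ℝ)) ^ 2 ≤ N ∧
          ((t.2.2.1 : ℝ)) ^ 2 ≤ N ∧ ((t.2.2.2 : ℝ)) ^ 2 ≤ N ∧
          t.1 ^ 2 + t.2.2.2 ^ 2 = t.2.1 ^ 2 + t.2.2.1 ^ 2 + m ∧
          ((t.1 : ℝ) < z ∨ (t.2.1 : ℝ) < z)} with hSdef
  have hN0 : (0:ℝ) < N := lt_of_lt_of_le one_pos hN
  set s : ℕ := ⌊N ^ ((2:ℝ)⁻¹)⌋₊ with hsdef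
  set zn : ℕ := ⌈z⌉₊ with hzndef
  set a₀ : ℕ := ⌊N ^ ((6:ℝ)⁻¹)⌋₊ with ha0def
  have hs1 : (s:ℝ) ≤ N ^ ((2:ℝ)⁻¹) := Nat.floor_le (by positivity)
  have ha1 : (a₀:ℝ) ≤ N ^ ((6:ℝ)⁻¹) := Nat.floor_le (by positivity)
  have hN61 : (1:ℝ) ≤ N ^ ((6:ℝ)⁻¹) := by
    have := Real.rpow_le_rpow_of_exponent_le hN (show (0:ℝ) ≤ (6:ℝ)⁻¹ by norm_num)
    rwa [Real.rpow_zero] at this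
  have hzn1 : ((zn - 1 : ℕ) : ℝ) ≤ z := by
    have h2 : 1 ≤ zn := Nat.one_le_ceil_iff.mpr (by linarith)
    have h1 : (zn:ℝ) < z + 1 := Nat.ceil_lt_add_one (by linarith)
    rw [Nat.cast_sub h2]
    push_cast
    linarith
  have hcoord : ∀ x : ℕ, ((x:ℝ)) ^ 2 ≤ N → x ≤ s := by
    intro x hx
    refine Nat.le_floor ?_
    exact_mod_cast le_rpow_inv_of_pow_le two_ne_zero (Nat.cast_nonneg x) hx
  have hcoord' : ∀ x : ℕ, x ≤ s → ((x:ℝ)) ^ 2 ≤ N := by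
    intro x hx
    have h1 : (x:ℝ) ≤ N ^ ((2:ℝ)⁻¹) := le_trans (Nat.cast_le.mpr hx) hs1
    calc ((x:ℝ))^2 ≤ (N ^ ((2:ℝ)⁻¹))^2 := pow_le_pow_left₀ (Nat.cast_nonneg x) h1 2
      _ = N := by
          rw [← Real.rpow_natCast (N ^ ((2:ℝ)⁻¹)) 2, ← Real.rpow_mul hN0.le]
          norm_num
  have hlt : ∀ x : ℕ, (x:ℝ) < z → x < zn := by
    intro x hx
    have h : (x:ℝ) < (zn:ℝ) := lt_of_lt_of_le hx (Nat.le_ceil z)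
    exact_mod_cast h
  -- finiteness of S
  have hfinS : S.Finite := by
    apply Set.Finite.subset
      ((Finset.Icc 1 s ×ˢ Finset.Icc 1 s ×ˢ Finset.Icc 1 s ×ˢ Finset.Icc 1 s :
        Finset (ℕ×ℕ×ℕ×ℕ)).finite_toSet)
    rintro ⟨x1,x2,x3,x4⟩ ⟨h1,h2,h3,h4,hb1,hb2,hb3,hb4,heq,hor⟩
    simp only [Finset.coe_product, Finset.mem_coe, Finset.mem_product, Finset.mem_Icc,
      Set.mem_prod]
    exact ⟨⟨h1, hcoord _ hb1⟩, ⟨h2, hcoord _ hb2⟩, ⟨h3, hcoord _ hb3⟩, h4, hcoord _ hb4⟩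
  -- the three pieces
  set A : Set (ℕ×ℕ×ℕ×ℕ) := {t | t ∈ S ∧ t.2.2.1 = t.2.2.2} with hAdef
  set B : Set (ℕ×ℕ×ℕ×ℕ) :=
    {t | t ∈ S ∧ t.2.2.1 ≠ t.2.2.2 ∧ ((t.2.2.2:ℤ) - (t.2.2.1:ℤ)).natAbs ≤ a₀} with hBdef
  set W : Set (ℕ×ℕ×ℕ×ℕ) :=
    {t | t ∈ S ∧ a₀ < ((t.2.2.2:ℤ) - (t.2.2.1:ℤ)).natAbs} with hWdef
  have hAS : A ⊆ S := fun t ht => ht.1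
  have hBS : B ⊆ S := fun t ht => ht.1
  have hWS : W ⊆ S := fun t ht => ht.1
  have hcover : S ⊆ A ∪ B ∪ W := by
    intro t ht
    rcases eq_or_ne t.2.2.1 t.2.2.2 with h | h
    · exact Or.inl (Or.inl ⟨ht, h⟩)
    rcases le_or_gt (((t.2.2.2:ℤ) - (t.2.2.1:ℤ)).natAbs) a₀ with h2 | h2
    · exact Or.inl (Or.inr ⟨ht, h, h2⟩)
    · exact Or.inr ⟨ht, h2⟩
  have htotal : S.ncard ≤ A.ncard + B.ncard + W.ncard := by
    calc S.ncard ≤ (A ∪ B ∪ W).ncard := Set.ncard_le_ncard hcover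
          (((hfinS.subset hAS).union (hfinS.subset hBS)).union (hfinS.subset hWS))
      _ ≤ (A ∪ B).ncard + W.ncard := Set.ncard_union_le _ _
      _ ≤ A.ncard + B.ncard + W.ncard := by
          have := Set.ncard_union_le A B
          omega
  -- the pair finset P
  set P : Finset (ℕ × ℕ) := (Finset.Icc 1 s ×ˢ Finset.Icc 1 s).filter
    (fun p => p.1 < zn ∨ p.2 < zn) with hPdef
  have hPcard : P.card ≤ (zn - 1) * s + s * (zn - 1) := by
    have hsub : P ⊆ (Finset.Ico 1 zn ×ˢ Finset.Icc 1 s) ∪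
        (Finset.Icc 1 s ×ˢ Finset.Ico 1 zn) := by
      intro p hp
      simp only [hPdef, Finset.mem_filter, Finset.mem_product, Finset.mem_Icc] at hp
      obtain ⟨⟨⟨hp11, hp12⟩, hp21, hp22⟩, hor⟩ := hp
      rcases hor with h | h
      · refine Finset.mem_union_left _ ?_
        simp only [Finset.mem_product, Finset.mem_Ico, Finset.mem_Icc]
        omega
      · refine Finset.mem_union_right _ ?_
        simp only [Finset.mem_product, Finset.mem_Ico, Finset.mem_Icc]
        omega
    calc P.card ≤ _ := Finset.card_le_card hsub
      _ ≤ (Finset.Ico 1 zn ×ˢ Finset.Icc 1 s).card +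
          (Finset.Icc 1 s ×ˢ Finset.Ico 1 zn).card := Finset.card_union_le _ _
      _ = (zn - 1) * s + s * (zn - 1) := by
          simp [Finset.card_product, Nat.card_Ico, Nat.card_Icc]
  have hPreal : (P.card:ℝ) ≤ 2 * (z * N ^ ((2:ℝ)⁻¹)) := by
    have h0' : (0:ℝ) ≤ (s:ℝ) := Nat.cast_nonneg _
    have hc : (P.card:ℝ) ≤ ((zn-1:ℕ):ℝ) * s + (s:ℝ) * ((zn-1:ℕ):ℝ) := by
      exact_mod_cast Nat.cast_le.mpr hPcard
    have hNh : (0:ℝ) ≤ N ^ ((2:ℝ)⁻¹) := by positivity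
    nlinarith [mul_le_mul hzn1 hs1 h0' (by linarith : (0:ℝ) ≤ z)]
  have hmemP : ∀ t, t ∈ S → (t.1, t.2.1) ∈ P := by
    rintro ⟨x1,x2,x3,x4⟩ ⟨h1,h2,h3,h4,hb1,hb2,hb3,hb4,heq,hor⟩
    simp only [hPdef, Finset.mem_filter, Finset.mem_product, Finset.mem_Icc]
    refine ⟨⟨⟨h1, hcoord _ hb1⟩, h2, hcoord _ hb2⟩, ?_⟩
    rcases hor with h | h
    · exact Or.inl (hlt _ h)
    · exact Or.inr (hlt _ h)
  have hKt : ∀ t : ℕ×ℕ×ℕ×ℕ, t ∈ S →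
      ((t.2.2.2:ℤ) - (t.2.2.1:ℤ)) * ((t.2.2.2:ℤ) + (t.2.2.1:ℤ))
        = (t.2.1:ℤ)^2 + (m:ℤ) - (t.1:ℤ)^2 := by
    rintro ⟨x1,x2,x3,x4⟩ ⟨-,-,-,-,-,-,-,-,heq,-⟩
    have hzz : ((x1:ℤ))^2 + (x4:ℤ)^2 = (x2:ℤ)^2 + (x3:ℤ)^2 + (m:ℤ) := by exact_mod_cast heq
    linear_combination hzz
  -- exponent arithmetic
  have hmulNN : N ^ ((2:ℝ)⁻¹) * N ^ ((6:ℝ)⁻¹) = N ^ ((2:ℝ)/3) := by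
    rw [← Real.rpow_add hN0]; norm_num
  have hhalf : N ^ ((2:ℝ)⁻¹) ≤ N ^ ((2:ℝ)/3) :=
    Real.rpow_le_rpow_of_exponent_le hN (by norm_num)
  ------------------------------------------------------------------
  -- piece A
  have hAcard : A.ncard ≤ (Finset.Ico 1 zn ×ˢ Finset.Icc 1 s).card := by
    apply set_ncard_le (f := fun t : ℕ×ℕ×ℕ×ℕ => (t.2.1, t.2.2.1))
    · rintro ⟨x1,x2,x3,x4⟩ ⟨⟨g1,g2,g3,g4,gb1,gb2,gb3,gb4,heq,gor⟩, hA3⟩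
        ⟨y1,y2,y3,y4⟩ ⟨⟨g1',g2',g3',g4',gb1',gb2',gb3',gb4',heq',gor'⟩, hA3'⟩ hfe
      simp only [Prod.mk.injEq] at hfe
      obtain ⟨e2, e3⟩ := hfe
      simp only at hA3 hA3'
      rw [← hA3] at heq
      rw [← hA3'] at heq'
      have hx : x1 ^ 2 = x2 ^ 2 + m := by zify at heq ⊢; linarith
      have hy : y1 ^ 2 = y2 ^ 2 + m := by zify at heq' ⊢; linarith
      have e1 : x1 = y1 := by
        have h12 : x1 ^ 2 = y1 ^ 2 := by rw [hx, hy, e2]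
        exact Nat.pow_left_injective (by norm_num) h12
      have e4 : x4 = y4 := by rw [← hA3, ← hA3', e3]
      simp only [Prod.mk.injEq]
      exact ⟨e1, e2, e3, e4⟩
    · rintro ⟨x1,x2,x3,x4⟩ ⟨⟨g1,g2,g3,g4,gb1,gb2,gb3,gb4,heq,gor⟩, hA3⟩
      simp only at hA3
      rw [← hA3] at heq
      have hx : x1 ^ 2 = x2 ^ 2 + m := by zify at heq ⊢; linarith
      have hlt12 : x2 < x1 := by
        have h2 : x2 ^ 2 < x1 ^ 2 := by rw [hx]; exact Nat.lt_add_of_pos_right hm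
        exact lt_of_pow_lt_pow_left₀ 2 (Nat.zero_le _) h2
      have hx2z : (x2:ℝ) < z := by
        rcases gor with h | h
        · have hcast : (x2:ℝ) < (x1:ℝ) := by exact_mod_cast hlt12
          linarith
        · exact h
      simp only [Finset.mem_product, Finset.mem_Ico, Finset.mem_Icc]
      exact ⟨⟨g2, hlt _ hx2z⟩, g3, hcoord _ gb3⟩
  have hAreal : (A.ncard : ℝ) ≤ N ^ ((2:ℝ)/3) * z := by
    have h1 : A.ncard ≤ (zn - 1) * s := by
      refine le_trans hAcard (le_of_eq ?_)
      simp [Finset.card_product, Nat.card_Ico, Nat.card_Icc]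
    have h2 : (A.ncard:ℝ) ≤ ((zn-1:ℕ):ℝ) * (s:ℝ) := by exact_mod_cast h1
    calc (A.ncard:ℝ) ≤ ((zn-1:ℕ):ℝ) * (s:ℝ) := h2
      _ ≤ z * N^((2:ℝ)⁻¹) :=
          mul_le_mul hzn1 hs1 (Nat.cast_nonneg _) (by linarith)
      _ ≤ z * N^((2:ℝ)/3) := by
          exact mul_le_mul_of_nonneg_left hhalf (by linarith)
      _ = N^((2:ℝ)/3) * z := mul_comm _ _
  ------------------------------------------------------------------
  -- piece B
  have hBcard : B.ncard ≤ (P ×ˢ Finset.Icc (-(a₀:ℤ)) (a₀:ℤ)).card := by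
    apply set_ncard_le
      (f := fun t : ℕ×ℕ×ℕ×ℕ => ((t.1, t.2.1), (t.2.2.2:ℤ) - (t.2.2.1:ℤ)))
    · rintro ⟨x1,x2,x3,x4⟩ ⟨htS, hne, hle⟩ ⟨y1,y2,y3,y4⟩ ⟨htS', hne', hle'⟩ hfe
      simp only [Prod.mk.injEq] at hfe
      obtain ⟨⟨e1, e2⟩, e3⟩ := hfe
      have hK := hKt _ htS
      have hK' := hKt _ htS'
      simp only at hK hK' hne hne' e3
      rw [e1, e2] at hK
      have h := hK.trans hK'.symm
      rw [e3] at h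
      have hd0' : ((y4:ℤ) - (y3:ℤ)) ≠ 0 := by
        intro hc
        apply hne'
        omega
      have hbb : (x4:ℤ) + (x3:ℤ) = (y4:ℤ) + (y3:ℤ) := mul_left_cancel₀ hd0' h
      have e34 : x3 = y3 ∧ x4 = y4 := by constructor <;> omega
      simp only [Prod.mk.injEq]
      exact ⟨e1, e2, e34.1, e34.2⟩
    · rintro ⟨x1,x2,x3,x4⟩ ⟨htS, hne, hle⟩
      simp only [Finset.mem_product]
      refine ⟨hmemP _ htS, Finset.mem_Icc.mpr ?_⟩
      simp only at hle
      omega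
  have hIccA : ((Finset.Icc (-(a₀:ℤ)) (a₀:ℤ)).card : ℝ) ≤ 3 * N ^ ((6:ℝ)⁻¹) := by
    have hc : (Finset.Icc (-(a₀:ℤ)) (a₀:ℤ)).card = 2*a₀+1 := by
      rw [Int.card_Icc]
      omega
    rw [hc]
    push_cast
    linarith [ha1, hN61]
  have hBreal : (B.ncard:ℝ) ≤ 6 * (N ^ ((2:ℝ)/3) * z) := by
    have h1 : (B.ncard : ℝ) ≤ (P.card:ℝ) * ((Finset.Icc (-(a₀:ℤ)) (a₀:ℤ)).card:ℝ) := by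
      have h := hBcard
      rw [Finset.card_product] at h
      exact_mod_cast h
    calc (B.ncard:ℝ) ≤ (P.card:ℝ) * ((Finset.Icc (-(a₀:ℤ)) (a₀:ℤ)).card:ℝ) := h1
      _ ≤ (2*(z * N^((2:ℝ)⁻¹))) * (3 * N^((6:ℝ)⁻¹)) :=
          mul_le_mul hPreal hIccA (Nat.cast_nonneg _) (by positivity)
      _ = 6 * ((N^((2:ℝ)⁻¹) * N^((6:ℝ)⁻¹)) * z) := by ring
      _ = 6 * (N^((2:ℝ)/3) * z) := by rw [hmulNN]
  ------------------------------------------------------------------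
  -- piece W
  set T : Finset ((ℕ×ℕ)×ℕ) := P.biUnion
    (fun p => {p} ×ˢ ((p.2:ℤ)^2 + (m:ℤ) - (p.1:ℤ)^2).natAbs.divisors) with hTdef
  have hWcard : W.ncard ≤ T.card := by
    apply set_ncard_le
      (f := fun t : ℕ×ℕ×ℕ×ℕ => ((t.1, t.2.1), ((t.2.2.2:ℤ) - (t.2.2.1:ℤ)).natAbs))
    · rintro ⟨x1,x2,x3,x4⟩ ⟨htS, hgt⟩ ⟨y1,y2,y3,y4⟩ ⟨htS', hgt'⟩ hfe
      simp only [Prod.mk.injEq] at hfe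
      obtain ⟨⟨e1, e2⟩, e3⟩ := hfe
      have hK := hKt _ htS
      have hK' := hKt _ htS'
      obtain ⟨-,-,g3,g4,-,-,-,-,-,-⟩ := htS
      obtain ⟨-,-,g3',g4',-,-,-,-,-,-⟩ := htS'
      simp only at hK hK' hgt hgt' e3
      rw [e1, e2] at hK
      have h := hK.trans hK'.symm
      have habs : ((x4:ℤ) - x3).natAbs * ((x4:ℤ)+x3).natAbs
          = ((y4:ℤ)-y3).natAbs * ((y4:ℤ)+y3).natAbs := by
        rw [← Int.natAbs_mul, ← Int.natAbs_mul, h]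
      rw [e3] at habs
      have hane : 0 < ((y4:ℤ)-y3).natAbs := by omega
      have hbeq : ((x4:ℤ)+x3).natAbs = ((y4:ℤ)+y3).natAbs :=
        Nat.eq_of_mul_eq_mul_left hane habs
      have hbb : (x4:ℤ) + x3 = (y4:ℤ) + y3 := by omega
      have hbne : (x4:ℤ) + x3 ≠ 0 := by omega
      have hdd : (x4:ℤ) - x3 = (y4:ℤ) - y3 := by
        apply mul_right_cancel₀ hbne
        calc ((x4:ℤ)-x3)*((x4:ℤ)+x3) = ((y4:ℤ)-y3)*((y4:ℤ)+y3) := h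
          _ = ((y4:ℤ)-y3)*((x4:ℤ)+x3) := by rw [hbb]
      have e34 : x3 = y3 ∧ x4 = y4 := by constructor <;> omega
      simp only [Prod.mk.injEq]
      exact ⟨e1, e2, e34.1, e34.2⟩
    · rintro ⟨x1,x2,x3,x4⟩ ⟨htS, hgt⟩
      have hp := hmemP _ htS
      have hK := hKt _ htS
      obtain ⟨-,-,g3,g4,-,-,-,-,-,-⟩ := htS
      simp only at hK hgt
      have hd0 : ((x4:ℤ) - x3) ≠ 0 := by omega
      have hb0 : ((x4:ℤ) + x3) ≠ 0 := by omega
      rw [hTdef]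
      apply Finset.mem_biUnion.mpr
      refine ⟨(x1,x2), hp, ?_⟩
      refine Finset.mem_product.mpr ⟨Finset.mem_singleton_self _, Nat.mem_divisors.mpr ⟨?_, ?_⟩⟩
      · refine Int.natAbs_dvd_natAbs.mpr ?_
        exact ⟨(x4:ℤ)+x3, hK.symm⟩
      · rw [Int.natAbs_ne_zero, ← hK]
        exact mul_ne_zero hd0 hb0
  have hTreal : (T.card : ℝ) ≤ (P.card:ℝ) * ((2*4096^65:ℝ)^((6:ℝ)⁻¹) * N^((6:ℝ)⁻¹)) := by
    have h1 : T.card ≤ ∑ p ∈ P,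
        ({p} ×ˢ ((p.2:ℤ)^2 + (m:ℤ) - (p.1:ℤ)^2).natAbs.divisors).card :=
      Finset.card_biUnion_le
    have h2 : ∀ p ∈ P,
        ((({p} ×ˢ ((p.2:ℤ)^2 + (m:ℤ) - (p.1:ℤ)^2).natAbs.divisors).card :ℕ):ℝ)
        ≤ (2*4096^65:ℝ)^((6:ℝ)⁻¹) * N^((6:ℝ)⁻¹) := by
      intro p hp
      rw [Finset.card_product, Finset.card_singleton, one_mul]
      set K : ℕ := ((p.2:ℤ)^2 + (m:ℤ) - (p.1:ℤ)^2).natAbs with hKdef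
      have hKb : (K : ℝ) ≤ 2 * N := by
        simp only [hPdef, Finset.mem_filter, Finset.mem_product, Finset.mem_Icc] at hp
        have q1 : ((p.1:ℝ))^2 ≤ N := hcoord' _ hp.1.1.2
        have q2 : ((p.2:ℝ))^2 ≤ N := hcoord' _ hp.1.2.2
        have hKeq : (K:ℝ) = |((p.2:ℝ))^2 + (m:ℝ) - ((p.1:ℝ))^2| := by
          rw [hKdef, Nat.cast_natAbs]
          push_cast
          ring_nf
        rw [hKeq]
        apply abs_le.mpr
        constructor <;>
          linarith [sq_nonneg ((p.1:ℝ)), sq_nonneg ((p.2:ℝ)),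
            (Nat.cast_nonneg m : (0:ℝ) ≤ m)]
      have hd6 : ((K.divisors.card : ℕ):ℝ)^6 ≤ (2*4096^65:ℝ) * N := by
        have hq := card_divisors_pow6_le K
        have h1 : ((K.divisors.card:ℕ):ℝ)^6 ≤ (4096:ℝ)^65 * (K:ℝ) := by exact_mod_cast hq
        calc ((K.divisors.card:ℕ):ℝ)^6 ≤ (4096:ℝ)^65 * (K:ℝ) := h1
          _ ≤ (4096:ℝ)^65 * (2*N) := mul_le_mul_of_nonneg_left hKb (by positivity)
          _ = (2*4096^65:ℝ) * N := by ring
      have hle6 := le_rpow_inv_of_pow_le (n := 6) (by norm_num) (Nat.cast_nonneg _) hd6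
      calc ((K.divisors.card:ℕ):ℝ) ≤ ((2*4096^65:ℝ) * N)^((6:ℝ)⁻¹) := by exact_mod_cast hle6
        _ = (2*4096^65:ℝ)^((6:ℝ)⁻¹) * N^((6:ℝ)⁻¹) := Real.mul_rpow (by positivity) hN0.le
    calc (T.card:ℝ) ≤ ((∑ p ∈ P,
          ({p} ×ˢ ((p.2:ℤ)^2 + (m:ℤ) - (p.1:ℤ)^2).natAbs.divisors).card : ℕ):ℝ) :=
        Nat.cast_le.mpr h1
      _ = ∑ p ∈ P, ((({p} ×ˢ ((p.2:ℤ)^2 + (m:ℤ) - (p.1:ℤ)^2).natAbs.divisors).card:ℕ):ℝ) := by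
          push_cast
          rfl
      _ ≤ ∑ p ∈ P, ((2*4096^65:ℝ)^((6:ℝ)⁻¹) * N^((6:ℝ)⁻¹)) := Finset.sum_le_sum h2
      _ = (P.card:ℝ) * ((2*4096^65:ℝ)^((6:ℝ)⁻¹) * N^((6:ℝ)⁻¹)) := by
          rw [Finset.sum_const, nsmul_eq_mul]
  have hWreal : (W.ncard:ℝ) ≤ 2 * (2*4096^65:ℝ)^((6:ℝ)⁻¹) * (N^((2:ℝ)/3) * z) := by
    calc (W.ncard:ℝ) ≤ (T.card:ℝ) := Nat.cast_le.mpr hWcard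
      _ ≤ (P.card:ℝ) * ((2*4096^65:ℝ)^((6:ℝ)⁻¹) * N^((6:ℝ)⁻¹)) := hTreal
      _ ≤ (2*(z * N^((2:ℝ)⁻¹))) * ((2*4096^65:ℝ)^((6:ℝ)⁻¹) * N^((6:ℝ)⁻¹)) := by
          apply mul_le_mul_of_nonneg_right hPreal (by positivity)
      _ = 2 * (2*4096^65:ℝ)^((6:ℝ)⁻¹) * ((N^((2:ℝ)⁻¹) * N^((6:ℝ)⁻¹)) * z) := by ring
      _ = 2 * (2*4096^65:ℝ)^((6:ℝ)⁻¹) * (N^((2:ℝ)/3) * z) := by rw [hmulNN]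
  ------------------------------------------------------------------
  calc (S.ncard:ℝ) ≤ (A.ncard:ℝ) + (B.ncard:ℝ) + (W.ncard:ℝ) := by exact_mod_cast htotal
    _ ≤ N^((2:ℝ)/3) * z + 6 * (N^((2:ℝ)/3)*z)
        + 2 * (2*4096^65:ℝ)^((6:ℝ)⁻¹) * (N^((2:ℝ)/3)*z) := by
        linarith [hAreal, hBreal, hWreal]
    _ = (7 + 2 * (2 * 4096 ^ 65:ℝ) ^ ((6:ℝ)⁻¹)) * N^((2:ℝ)/3) * z := by ring
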